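/- Let f be a convex function on the probability simplex Δ over a finite set, α > 0, and y a point in the interior of Δ. Suppose x* minimizes x ↦ f(x) + (1/α) D(x||y) over Δ and x* lies in the interior of Δ. Then for every z ∈ Δ: f(x*) + (1/α)D(x*||y) ≤ f(z) + (1/α)D(z||y) - (1/α)D(z||x*). -/

import Mathlib

open Finset

theorem pushback_lemma (A : Type*) [Fintype A] [Nonempty A]
    (f : (A → ℝ) → ℝ)
    (hf : ConvexOn ℝ {p : A → ℝ | (∀ a, 0 ≤ p a) ∧ ∑ a, p a = 1} f)
    (α : ℝ) (hα : 0 < α)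
    (y : A → ℝ) (hy : ∀ a, 0 < y a) (hysum : ∑ a, y a = 1)
    (xstar : A → ℝ) (hxpos : ∀ a, 0 < xstar a) (hxsum : ∑ a, xstar a = 1)
    (hmin : ∀ z : A → ℝ, (∀ a, 0 ≤ z a) → ∑ a, z a = 1 →
      f xstar + (1 / α) * ∑ a, xstar a * Real.log (xstar a / y a) ≤
        f z + (1 / α) * ∑ a, z a * Real.log (z a / y a)) :
    ∀ z : A → ℝ, (∀ a, 0 ≤ z a) → ∑ a, z a = 1 →
      f xstar + (1 / α) * ∑ a, xstar a * Real.log (xstar a / y a) ≤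
        f z + (1 / α) * ∑ a, z a * Real.log (z a / y a)
          - (1 / α) * ∑ a, z a * Real.log (z a / xstar a) := by
  intro z hz hzsum
  -- Step 1: termwise log identity
  have hlog : ∀ a, z a * Real.log (z a / y a) - z a * Real.log (z a / xstar a)
      = z a * Real.log (xstar a / y a) := by
    intro a
    rcases eq_or_lt_of_le (hz a) with h | h
    · simp [← h]
    · rw [Real.log_div h.ne' (hy a).ne', Real.log_div h.ne' (hxpos a).ne',
        Real.log_div (hxpos a).ne' (hy a).ne']
      ring
  have hsum1 : (∑ a, z a * Real.log (z a / y a)) - ∑ a, z a * Real.log (z a / xstar a)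
      = ∑ a, z a * Real.log (xstar a / y a) := by
    rw [← Finset.sum_sub_distrib]
    exact Finset.sum_congr rfl fun a _ => hlog a
  -- Step 2: set up the path and its KL value
  set g : ℝ → ℝ := fun t => ∑ a, (xstar a + t * (z a - xstar a)) *
      Real.log ((xstar a + t * (z a - xstar a)) / y a) with hg
  set L : ℝ := ∑ a, (z a - xstar a) * (Real.log (xstar a / y a) + 1) with hL
  have hderiv : HasDerivAt g L 0 := by
    rw [hg, hL]
    apply HasDerivAt.fun_sum
    intro a _
    set c := xstar a with hc
    set d := z a - xstar a with hd
    have hcpos : 0 < c := hxpos a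
    have hlin : HasDerivAt (fun t : ℝ => c + t * d) d 0 :=
      (hasDerivAt_mul_const d).const_add c
    have h0 : c + (0 : ℝ) * d = c := by ring
    have hmul : HasDerivAt (fun u : ℝ => u * Real.log u) (Real.log c + 1) (c + 0 * d) := by
      rw [h0]; exact Real.hasDerivAt_mul_log hcpos.ne'
    have hcomp : HasDerivAt (fun t : ℝ => (c + t * d) * Real.log (c + t * d))
        ((Real.log c + 1) * d) 0 := by have := hmul.comp 0 hlin; exact this
    have hsub : HasDerivAt (fun t : ℝ => (c + t * d) * Real.log (y a))
        (d * Real.log (y a)) 0 := hlin.mul_const _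
    have hdiff := hcomp.fun_sub hsub
    have hfun : (fun t : ℝ => (c + t * d) * Real.log (c + t * d)
        - (c + t * d) * Real.log (y a))
        = fun t : ℝ => (c + t * d) * Real.log ((c + t * d) / y a) := by
      funext t
      rcases eq_or_ne (c + t * d) 0 with h | h
      · simp [h]
      · rw [Real.log_div h (hy a).ne']; ring
    rw [hfun] at hdiff
    convert hdiff using 1
    rw [Real.log_div hcpos.ne' (hy a).ne']
    ring
  -- Step 3: slope inequality for small t and passage to the limit
  have hslope : Filter.Tendsto (fun t => (1 / α) * ((g t - g 0) / t))
      (nhdsWithin 0 (Set.Ioi 0)) (nhds ((1 / α) * L)) := by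
    have h1 := hasDerivAt_iff_tendsto_slope.mp hderiv
    have h2 : Filter.Tendsto (slope g 0) (nhdsWithin 0 (Set.Ioi 0)) (nhds L) :=
      h1.mono_left (nhdsWithin_mono 0 fun t ht => ne_of_gt ht)
    have h3 : (fun t => (1 / α) * ((g t - g 0) / t)) = fun t => (1 / α) * slope g 0 t := by
      funext t; rw [slope_def_field]; ring_nf
    rw [h3]
    exact h2.const_mul _
  have key : f xstar - f z ≤ (1 / α) * L := by
    refine ge_of_tendsto hslope ?_
    filter_upwards [Ioc_mem_nhdsGT_of_mem (Set.left_mem_Ico.mpr one_pos)] with t ht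
    obtain ⟨ht0, ht1⟩ := ht
    set w : A → ℝ := fun a => xstar a + t * (z a - xstar a) with hw
    have hw0 : ∀ a, 0 ≤ w a := by
      intro a
      have h1 := (hxpos a).le
      have h2 := hz a
      simp only [hw]
      nlinarith
    have hwsum : ∑ a, w a = 1 := by
      simp only [hw]
      rw [Finset.sum_add_distrib, ← Finset.mul_sum, Finset.sum_sub_distrib, hxsum, hzsum]
      ring
    have hweq : w = (1 - t) • xstar + t • z := by
      funext a
      simp only [hw, Pi.add_apply, Pi.smul_apply, smul_eq_mul]
      ring
    have hconv : f w ≤ (1 - t) * f xstar + t * f z := by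
      rw [hweq]
      exact hf.2 ⟨fun a => (hxpos a).le, hxsum⟩ ⟨hz, hzsum⟩ (by linarith) ht0.le (by ring)
    have hming := hmin w hw0 hwsum
    have hg0 : g 0 = ∑ a, xstar a * Real.log (xstar a / y a) := by
      simp [hg]
    have hgt : g t = ∑ a, w a * Real.log (w a / y a) := rfl
    rw [← hg0, ← hgt] at hming
    have h1 : t * (f xstar - f z) ≤ (1 / α) * (g t - g 0) := by nlinarith
    calc f xstar - f z = (t * (f xstar - f z)) / t := by field_simp
      _ ≤ ((1 / α) * (g t - g 0)) / t := by gcongr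
      _ = (1 / α) * ((g t - g 0) / t) := by ring
  -- Step 4: compute L and finish
  have hLval : L = (∑ a, z a * Real.log (xstar a / y a))
      - ∑ a, xstar a * Real.log (xstar a / y a) := by
    rw [hL]
    have : ∀ a ∈ Finset.univ, (z a - xstar a) * (Real.log (xstar a / y a) + 1)
        = (z a * Real.log (xstar a / y a) - xstar a * Real.log (xstar a / y a))
          + (z a - xstar a) := by intro a _; ring
    rw [Finset.sum_congr rfl this, Finset.sum_add_distrib, Finset.sum_sub_distrib,
      Finset.sum_sub_distrib, hzsum, hxsum]
    ring
  have hfinal : f z + (1 / α) * ∑ a, z a * Real.log (z a / y a)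
      - (1 / α) * ∑ a, z a * Real.log (z a / xstar a)
      = f z + (1 / α) * ∑ a, z a * Real.log (xstar a / y a) := by
    rw [← hsum1]; ring
  rw [hfinal]
  rw [hLval] at key
  linarith
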